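/- Let A be an n×n complex matrix with index k (the smallest nonnegative integer with rank(A^k) = rank(A^{k+1})). Then there exists a unique n×n matrix X satisfying X * A^(k+1) = A^k, A * X * X = X, and (A*X)^* = A*X (i.e., A*X is Hermitian). This unique X is called the core-EP inverse of A. -/

import Mathlib

open Matrix
noncomputable def matIndex {n : ℕ} (M : Matrix (Fin n) (Fin n) ℂ) : ℕ :=
  sInf {j | (M ^ j).rank = (M ^ (j + 1)).rank}

def IsCoreEP {n : ℕ} (M X : Matrix (Fin n) (Fin n) ℂ) : Prop :=
  X * M ^ (matIndex M + 1) = M ^ (matIndex M) ∧ M * X * X = X ∧ (M * X)ᴴ = M * X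

def IsMP {m n : ℕ} (A : Matrix (Fin m) (Fin n) ℂ) (X : Matrix (Fin n) (Fin m) ℂ) : Prop :=
  A * X * A = A ∧ X * A * X = X ∧ (A * X)ᴴ = A * X ∧ (X * A)ᴴ = X * A

def IsDrazin {n : ℕ} (M X : Matrix (Fin n) (Fin n) ℂ) : Prop :=
  M * X = X * M ∧ X * M * X = X ∧ M ^ (matIndex M + 1) * X = M ^ (matIndex M)

variable {n : ℕ}

private lemma chainX (A X Y : Matrix (Fin n) (Fin n) ℂ)
    (hY : A * Y * Y = Y) (m : ℕ) : X * A ^ (m + 1) * Y ^ (m + 1) = X * A * Y := by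
  induction m with
  | zero => simp
  | succ m ih =>
    have hYp : Y ^ (m + 1) = A * Y ^ (m + 2) := by
      calc Y ^ (m + 1) = (A * Y * Y) * Y ^ m := by rw [hY, pow_succ']
        _ = A * (Y * (Y * Y ^ m)) := by noncomm_ring
        _ = A * Y ^ (m + 2) := by rw [← pow_succ', ← pow_succ']
    calc X * A ^ (m + 2) * Y ^ (m + 2)
        = X * A ^ (m + 1) * (A * Y ^ (m + 2)) := by rw [pow_succ]; noncomm_ring
      _ = X * A ^ (m + 1) * Y ^ (m + 1) := by rw [← hYp]
      _ = X * A * Y := ih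

private lemma powX (A X : Matrix (Fin n) (Fin n) ℂ)
    (hX : A * X * X = X) (m : ℕ) : A ^ m * X ^ (m + 1) = X := by
  induction m with
  | zero => simp
  | succ m ih =>
    have : X ^ (m + 1) = A * X ^ (m + 2) := by
      calc X ^ (m + 1) = (A * X * X) * X ^ m := by rw [hX, pow_succ']
        _ = A * (X * (X * X ^ m)) := by noncomm_ring
        _ = A * X ^ (m + 2) := by rw [← pow_succ', ← pow_succ']
    calc A ^ (m + 1) * X ^ (m + 2) = A ^ m * (A * X ^ (m + 2)) := by rw [pow_succ]; noncomm_ring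
      _ = A ^ m * X ^ (m + 1) := by rw [← this]
      _ = X := ih

private lemma coreEP_unique (A X Y : Matrix (Fin n) (Fin n) ℂ) (k : ℕ)
    (hX1 : X * A ^ (k + 1) = A ^ k) (hX2 : A * X * X = X) (hX3 : (A * X)ᴴ = A * X)
    (hY1 : Y * A ^ (k + 1) = A ^ k) (hY2 : A * Y * Y = Y) (hY3 : (A * Y)ᴴ = A * Y) :
    X = Y := by
  have pX := powX A X hX2
  have pY := powX A Y hY2
  have hAX : A * X = A ^ (k + 1) * X ^ (k + 1) := by
    conv_lhs => rw [← pX k]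
    rw [← mul_assoc, ← pow_succ']
  have hAY : A * Y = A ^ (k + 1) * Y ^ (k + 1) := by
    conv_lhs => rw [← pY k]
    rw [← mul_assoc, ← pow_succ']
  have hPA : (A * X) * A ^ (k + 1) = A ^ (k + 1) := by
    rw [mul_assoc, hX1, ← pow_succ']
  have hQA : (A * Y) * A ^ (k + 1) = A ^ (k + 1) := by
    rw [mul_assoc, hY1, ← pow_succ']
  have hPQ : (A * X) * (A * Y) = A * Y := by
    rw [hAY, ← mul_assoc, hPA]
  have hQP : (A * Y) * (A * X) = A * X := by
    rw [hAX, ← mul_assoc, hQA]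
  have hXY : A * X = A * Y := by
    calc A * X = ((A * Y) * (A * X))ᴴᴴ := by rw [hQP, conjTranspose_conjTranspose]
      _ = ((A * X)ᴴ * (A * Y)ᴴ)ᴴ := by rw [conjTranspose_mul]
      _ = ((A * X) * (A * Y))ᴴ := by rw [hX3, hY3]
      _ = (A * Y)ᴴ := by rw [hPQ]
      _ = A * Y := hY3
  have hXAX : X * A * X = X := by
    calc X * A * X = X * A ^ (k + 1) * X ^ (k + 1) := (chainX A X X hX2 k).symm
      _ = A ^ k * X ^ (k + 1) := by rw [hX1]
      _ = X := pX k
  calc X = X * A * X := hXAX.symm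
    _ = X * (A * Y) := by rw [mul_assoc, hXY]
    _ = X * A ^ (k + 1) * Y ^ (k + 1) := by rw [← mul_assoc, chainX A X Y hY2 k]
    _ = A ^ k * Y ^ (k + 1) := by rw [hX1]
    _ = Y := pY k

private lemma index_set_nonempty (A : Matrix (Fin n) (Fin n) ℂ) :
    {j | (A ^ j).rank = (A ^ (j + 1)).rank}.Nonempty := by
  by_contra h
  rw [Set.not_nonempty_iff_eq_empty] at h
  have hstrict : ∀ j, (A ^ (j + 1)).rank < (A ^ j).rank := fun j => by
    have hle : (A ^ (j + 1)).rank ≤ (A ^ j).rank := by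
      rw [pow_succ]
      exact Matrix.rank_mul_le_left _ _
    have hne : (A ^ j).rank ≠ (A ^ (j + 1)).rank := fun he => by
      have : j ∈ {j | (A ^ j).rank = (A ^ (j + 1)).rank} := he
      simp [h] at this
    omega
  have key : ∀ m, (A ^ m).rank + m ≤ (A ^ 0).rank := by
    intro m
    induction m with
    | zero => simp
    | succ m ih => have := hstrict m; omega
  have h0 : (A ^ 0).rank = n := by simp [pow_zero]
  have := key (n + 1)
  omega

set_option synthInstance.maxHeartbeats 200000 in
private lemma exists_coreEP (A : Matrix (Fin n) (Fin n) ℂ) (k : ℕ)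
    (hrk : (A ^ k).rank = (A ^ (k + 1)).rank) :
    ∃ X : Matrix (Fin n) (Fin n) ℂ,
      X * A ^ (k + 1) = A ^ k ∧ A * X * X = X ∧ (A * X)ᴴ = A * X := by
  classical
  set Φ := Matrix.toEuclideanCLM (𝕜 := ℂ) (n := Fin n) with hΦ
  set f : EuclideanSpace ℂ (Fin n) →L[ℂ] EuclideanSpace ℂ (Fin n) := Φ A with hf
  have hfk : ∀ m : ℕ, Φ (A ^ m) = f ^ m := fun m => map_pow Φ A m
  -- ranges
  set U : Submodule ℂ (EuclideanSpace ℂ (Fin n)) := LinearMap.range ((f ^ k : _ →L[ℂ] _) : EuclideanSpace ℂ (Fin n) →ₗ[ℂ] EuclideanSpace ℂ (Fin n)) with hU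
  set U' : Submodule ℂ (EuclideanSpace ℂ (Fin n)) :=
    LinearMap.range ((f ^ (k + 1) : _ →L[ℂ] _) : EuclideanSpace ℂ (Fin n) →ₗ[ℂ] EuclideanSpace ℂ (Fin n)) with hU'
  -- rank transfer
  have hrank : ∀ m : ℕ, (A ^ m).rank =
      Module.finrank ℂ (LinearMap.range ((f ^ m : _ →L[ℂ] _) : EuclideanSpace ℂ (Fin n) →ₗ[ℂ] EuclideanSpace ℂ (Fin n))) := by
    intro m
    have hr : LinearMap.range ((toLin (PiLp.basisFun 2 ℂ (Fin n))
        (PiLp.basisFun 2 ℂ (Fin n))) (A ^ m)) = LinearMap.range ((f ^ m : _ →L[ℂ] _) : EuclideanSpace ℂ (Fin n) →ₗ[ℂ] EuclideanSpace ℂ (Fin n)) := by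
      ext y
      simp only [LinearMap.mem_range, ContinuousLinearMap.coe_coe]
      refine exists_congr fun x => ?_
      have : (toLin (PiLp.basisFun 2 ℂ (Fin n)) (PiLp.basisFun 2 ℂ (Fin n))) (A ^ m) x
          = (f ^ m) x := by rw [← hfk]; rfl
      rw [this]
    rw [Matrix.rank_eq_finrank_range_toLin (A ^ m) (PiLp.basisFun 2 ℂ (Fin n))
      (PiLp.basisFun 2 ℂ (Fin n)), hr]
  have hle : U' ≤ U := by
    rintro y ⟨x, rfl⟩
    exact ⟨f x, by simp only [ContinuousLinearMap.coe_coe]; rw [pow_succ, ContinuousLinearMap.mul_apply]⟩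
  have hEq : U' = U := by
    apply Submodule.eq_of_le_of_finrank_le hle
    rw [← hrank, ← hrank]
    exact hrk.le
  -- f maps U to U bijectively
  have hmaps : ∀ u ∈ U, f u ∈ U := by
    rintro u ⟨x, rfl⟩
    rw [← hEq]
    exact ⟨x, by simp only [ContinuousLinearMap.coe_coe]; rw [pow_succ', ContinuousLinearMap.mul_apply]⟩
  set φ : U →ₗ[ℂ] U := LinearMap.restrict (f : _ →ₗ[ℂ] _) hmaps with hφ
  have hφ_apply : ∀ (u : U), (φ u : EuclideanSpace ℂ (Fin n)) = f u := fun u => rfl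
  have hsurj : Function.Surjective φ := by
    rintro ⟨u, hu⟩
    rw [← hEq] at hu
    obtain ⟨x, rfl⟩ := hu
    refine ⟨⟨(f ^ k) x, ⟨x, rfl⟩⟩, ?_⟩
    apply Subtype.ext
    rw [hφ_apply]
    simp only [ContinuousLinearMap.coe_coe]
    rw [pow_succ', ContinuousLinearMap.mul_apply]
  have hbij : Function.Bijective φ :=
    ⟨(LinearMap.injective_iff_surjective).2 hsurj, hsurj⟩
  set e : U ≃ₗ[ℂ] U := LinearEquiv.ofBijective φ hbij with he
  set P : EuclideanSpace ℂ (Fin n) →L[ℂ] U := U.orthogonalProjectionOnto with hP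
  set g : EuclideanSpace ℂ (Fin n) →L[ℂ] EuclideanSpace ℂ (Fin n) :=
    LinearMap.toContinuousLinearMap
      (U.subtype ∘ₗ (e.symm : U →ₗ[ℂ] U) ∘ₗ (P : _ →ₗ[ℂ] _)) with hg
  have hg_apply : ∀ v, g v = (e.symm (P v) : EuclideanSpace ℂ (Fin n)) := fun v => rfl
  have hP_mem : ∀ (w : U), P (w : EuclideanSpace ℂ (Fin n)) = w := fun w =>
    Submodule.orthogonalProjectionOnto_mem_subspace_eq_self w
  have hg_mem : ∀ (w : U), g (w : EuclideanSpace ℂ (Fin n)) =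
      (e.symm w : EuclideanSpace ℂ (Fin n)) := by
    intro w; rw [hg_apply, hP_mem]
  have hfe : ∀ (w : U), f ((e.symm w : U) : EuclideanSpace ℂ (Fin n)) =
      (w : EuclideanSpace ℂ (Fin n)) := by
    intro w
    have : φ (e.symm w) = w := by
      have := e.apply_symm_apply w
      rwa [LinearEquiv.ofBijective_apply] at this
    rw [← hφ_apply, this]
  have hA : ∀ m : ℕ, A ^ m = Φ.symm (f ^ m) := fun m => by
    rw [← hfk m, StarAlgEquiv.symm_apply_apply]
  have hA1 : A = Φ.symm f := (StarAlgEquiv.symm_apply_apply Φ A).symm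
  have key1 : g * f ^ (k + 1) = f ^ k := by
    refine ContinuousLinearMap.ext fun x => ?_
    rw [ContinuousLinearMap.mul_apply]
    have hin : (f ^ (k + 1)) x ∈ U := hEq ▸ ⟨x, rfl⟩
    set w : U := ⟨(f ^ k) x, ⟨x, rfl⟩⟩ with hw
    have hφw : φ w = ⟨(f ^ (k + 1)) x, hin⟩ := by
      apply Subtype.ext
      rw [hφ_apply]
      simp only [hw]
      rw [pow_succ', ContinuousLinearMap.mul_apply]
    calc g ((f ^ (k + 1)) x) = (e.symm ⟨(f ^ (k + 1)) x, hin⟩ : EuclideanSpace ℂ (Fin n)) := by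
          rw [← hg_mem ⟨(f ^ (k + 1)) x, hin⟩]
      _ = (w : EuclideanSpace ℂ (Fin n)) := by
          congr 1
          rw [LinearEquiv.symm_apply_eq, ← hφw, he, LinearEquiv.ofBijective_apply]
      _ = (f ^ k) x := rfl
  have key2 : f * g * g = g := by
    refine ContinuousLinearMap.ext fun x => ?_
    rw [ContinuousLinearMap.mul_apply, ContinuousLinearMap.mul_apply]
    calc f (g (g x)) = f (g ((e.symm (P x) : U) : EuclideanSpace ℂ (Fin n))) := by
          rw [hg_apply x]
      _ = f ((e.symm (e.symm (P x)) : U) : EuclideanSpace ℂ (Fin n)) := by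
          rw [hg_mem]
      _ = ((e.symm (P x) : U) : EuclideanSpace ℂ (Fin n)) := hfe _
      _ = g x := (hg_apply x).symm
  have key3 : star (f * g) = f * g := by
    have hfg : f * g = U.subtypeL.comp P := by
      ext x
      rw [ContinuousLinearMap.mul_apply, hg_apply x, hfe]
      rfl
    rw [hfg]
    exact (isSelfAdjoint_starProjection U).star_eq
  refine ⟨Φ.symm g, ?_, ?_, ?_⟩
  · rw [hA (k + 1), hA k, ← _root_.map_mul]
    exact congrArg _ key1
  · rw [hA1, ← _root_.map_mul, ← _root_.map_mul]
    exact congrArg _ key2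
  · rw [← Matrix.star_eq_conjTranspose, hA1, ← _root_.map_mul, ← map_star]
    exact congrArg _ key3

theorem stmt0 {n : ℕ} (A : Matrix (Fin n) (Fin n) ℂ) (k : ℕ)
    (hk : k = matIndex A) :
    ∃! X : Matrix (Fin n) (Fin n) ℂ,
      X * A ^ (k + 1) = A ^ k ∧ A * X * X = X ∧ (A * X)ᴴ = A * X := by
  have hmem : matIndex A ∈ {j | (A ^ j).rank = (A ^ (j + 1)).rank} :=
    Nat.sInf_mem (index_set_nonempty A)
  have hrk : (A ^ k).rank = (A ^ (k + 1)).rank := by rw [hk]; exact hmem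
  obtain ⟨X, h1, h2, h3⟩ := exists_coreEP A k hrk
  exact ⟨X, ⟨h1, h2, h3⟩, fun Y ⟨g1, g2, g3⟩ =>
    coreEP_unique A Y X k g1 g2 g3 h1 h2 h3⟩
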